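/- Let f : ℕ^d → ℕ. If there exists an increasing sequence (a_1, a_2, …) in ℕ^d (a_i ≤ a_{i+1} for all i, not eventually constant) such that for all i < j there exists Δ_ij ∈ ℕ^d with f(a_i + Δ_ij) − f(a_i) > f(a_j + Δ_ij) − f(a_j), then f is not obliviously-computable. -/

import Mathlib

/-- A chemical reaction network with species type `σ`, designated input species
`inputs i` for each of the `d` inputs, an output species, and a leader species. -/
structure CRN (d : ℕ) (σ : Type) [Fintype σ] [DecidableEq σ] where
  /-- Each reaction is a pair `(r, p)` of reactant counts and product counts. -/
  reactions : Finset ((σ → ℕ) × (σ → ℕ))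
  inputs : Fin d → σ
  output : σ
  leader : σ
  inputs_inj : Function.Injective inputs
  leader_not_input : ∀ i, inputs i ≠ leader

namespace CRN

variable {d : ℕ} {σ : Type} [Fintype σ] [DecidableEq σ]

/-- One reaction step: some reaction `(r, p)` with `r ≤ c` pointwise fires,
yielding `c - r + p`. -/
def Step (C : CRN d σ) (c c' : σ → ℕ) : Prop :=
  ∃ rp ∈ C.reactions, rp.1 ≤ c ∧ c' = c - rp.1 + rp.2

/-- Reachability by a finite sequence of reaction steps. -/
def Reachable (C : CRN d σ) : (σ → ℕ) → (σ → ℕ) → Prop :=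
  Relation.ReflTransGen C.Step

/-- The initial configuration encoding input `x`: count `x i` of input species
`inputs i`, count 1 of the leader, count 0 of everything else. -/
def init (C : CRN d σ) (x : Fin d → ℕ) : σ → ℕ :=
  fun s => (∑ i, if C.inputs i = s then x i else 0) + (if s = C.leader then 1 else 0)

/-- A configuration is stable if the output count never changes from it. -/
def Stable (C : CRN d σ) (c : σ → ℕ) : Prop :=
  ∀ c', C.Reachable c c' → c' C.output = c C.output

/-- `C` stably computes `f` if from every configuration reachable from an initial
configuration, a stable configuration with correct output count is reachable. -/
def StablyComputes (C : CRN d σ) (f : (Fin d → ℕ) → ℕ) : Prop :=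
  ∀ x c, C.Reachable (C.init x) c →
    ∃ o, C.Reachable c o ∧ C.Stable o ∧ o C.output = f x

/-- A CRN is output-oblivious if the output species is never a reactant. -/
def OutputOblivious (C : CRN d σ) : Prop :=
  ∀ rp ∈ C.reactions, rp.1 C.output = 0

/-- A CRN is output-monotonic if no reaction decreases the output species count. -/
def OutputMonotonic (C : CRN d σ) : Prop :=
  ∀ rp ∈ C.reactions, rp.1 C.output ≤ rp.2 C.output

end CRN

/-- `f` is obliviously-computable if some output-oblivious CRN stably computes it. -/
def ObliviouslyComputable {d : ℕ} (f : (Fin d → ℕ) → ℕ) : Prop :=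
  ∃ (n : ℕ) (C : CRN d (Fin n)), C.OutputOblivious ∧ C.StablyComputes f


namespace CRN

variable {d : ℕ} {σ : Type} [Fintype σ] [DecidableEq σ]

lemma step_add (C : CRN d σ) {c c' : σ → ℕ} (e : σ → ℕ) (h : C.Step c c') :
    C.Step (c + e) (c' + e) := by
  obtain ⟨rp, hrp, hle, heq⟩ := h
  refine ⟨rp, hrp, fun s => le_trans (hle s) (by simp), ?_⟩
  funext s
  have h1 : rp.1 s ≤ c s := hle s
  simp only [heq, Pi.add_apply, Pi.sub_apply]
  omega

lemma reachable_add (C : CRN d σ) {c c' : σ → ℕ} (e : σ → ℕ) (h : C.Reachable c c') :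
    C.Reachable (c + e) (c' + e) := by
  induction h with
  | refl => exact Relation.ReflTransGen.refl
  | tail _ hstep ih => exact Relation.ReflTransGen.tail ih (C.step_add e hstep)

lemma output_mono (C : CRN d σ) (hob : C.OutputOblivious) {c c' : σ → ℕ}
    (h : C.Reachable c c') : c C.output ≤ c' C.output := by
  induction h with
  | refl => exact le_refl _
  | tail _ hstep ih =>
    obtain ⟨rp, hrp, hle, heq⟩ := hstep
    have h0 : rp.1 C.output = 0 := hob rp hrp
    have h1 : rp.1 C.output ≤ _ := hle C.output
    simp only [heq, Pi.add_apply, Pi.sub_apply, h0]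
    omega

lemma init_add (C : CRN d σ) (x Δ : Fin d → ℕ) :
    C.init (x + Δ) = C.init x + fun s => ∑ i, if C.inputs i = s then Δ i else 0 := by
  funext s
  simp only [init, Pi.add_apply]
  have : (∑ i, if C.inputs i = s then x i + Δ i else 0)
      = (∑ i, if C.inputs i = s then x i else 0) + (∑ i, if C.inputs i = s then Δ i else 0) := by
    rw [← Finset.sum_add_distrib]
    refine Finset.sum_congr rfl fun i _ => ?_
    by_cases h : C.inputs i = s <;> simp [h]
  rw [this]; ring

end CRN

/-- **Dickson contradiction lemma.** If there is an increasing (pointwise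
nondecreasing, not eventually constant) sequence `a_1, a_2, …` in `ℕ^d` such that
for all `i < j` there is `Δ ∈ ℕ^d` with
`f(a_i + Δ) − f(a_i) > f(a_j + Δ) − f(a_j)`, then `f` is not
obliviously-computable. -/
theorem not_obliviouslyComputable_of_bad_sequence {d : ℕ} (f : (Fin d → ℕ) → ℕ)
    (a : ℕ → Fin d → ℕ)
    (hmono : ∀ i, a i ≤ a (i + 1))
    (hnec : ¬ ∃ N, ∀ m, N ≤ m → a m = a N)
    (hbad : ∀ i j, i < j → ∃ Δ : Fin d → ℕ,
      (f (a j + Δ) : ℤ) - (f (a j) : ℤ) < (f (a i + Δ) : ℤ) - (f (a i) : ℤ)) :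
    ¬ ObliviouslyComputable f := by
  rintro ⟨n, C, hob, hsc⟩
  -- stable outputs for each a m
  choose o hro hst hout using fun m => hsc (a m) (C.init (a m)) Relation.ReflTransGen.refl
  -- Dickson's lemma
  have hpwo : (Set.univ : Set (Fin n → ℕ)).IsPWO :=
    Set.isPWO_of_wellQuasiOrderedLE Set.univ
  obtain ⟨i, j, hij, hole⟩ := hpwo.exists_lt (f := o) (fun _ => Set.mem_univ _)
  obtain ⟨Δ, hΔ⟩ := hbad i j hij
  set inΔ : Fin n → ℕ := fun s => ∑ k, if C.inputs k = s then Δ k else 0 with hinΔ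
  have h1 : C.Reachable (C.init (a i + Δ)) (o i + inΔ) := by
    rw [C.init_add]; exact C.reachable_add inΔ (hro i)
  obtain ⟨o', ho'r, ho's, ho'out⟩ := hsc (a i + Δ) (o i + inΔ) h1
  set e : Fin n → ℕ := o j - o i with he
  have hoje : o j + inΔ = (o i + inΔ) + e := by
    funext s
    have hs : o i s ≤ o j s := hole s
    simp only [Pi.add_apply, Pi.sub_apply, he]
    omega
  have h2 : C.Reachable (C.init (a j + Δ)) (o' + e) := by
    have ha : C.Reachable (C.init (a j + Δ)) (o j + inΔ) := by
      rw [C.init_add]; exact C.reachable_add inΔ (hro j)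
    have hb : C.Reachable (o j + inΔ) (o' + e) := by
      rw [hoje]; exact C.reachable_add e ho'r
    exact Relation.ReflTransGen.trans ha hb
  obtain ⟨o'', ho''r, ho''s, ho''out⟩ := hsc (a j + Δ) (o' + e) h2
  have hmon : (o' + e) C.output ≤ o'' C.output := C.output_mono hob ho''r
  have hle : o i C.output ≤ o j C.output := hole C.output
  have hval : (o' + e) C.output = f (a i + Δ) + (o j C.output - o i C.output) := by
    simp only [Pi.add_apply, Pi.sub_apply, he, ho'out]
  rw [hout i, hout j] at hle
  rw [hout i, hout j] at hval
  rw [ho''out] at hmon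
  omega
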